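/- For n ≥ m ≥ 1, the number of order-preserving, order-decreasing partial isometries of {1,...,n} with exactly m fixed points equals C(n, m). -/

import Mathlib

/-- Partial maps on ℕ; `none` means undefined. -/
def PDom (α : ℕ → Option ℕ) : Set ℕ := {x | α x ≠ none}
def PImg (α : ℕ → Option ℕ) : Set ℕ := {y | ∃ x, α x = some y}
def PFix (α : ℕ → Option ℕ) : Set ℕ := {x | α x = some x}

/-- `α` is a partial injective isometry of the chain {1,…,n}. -/
def PIso (n : ℕ) (α : ℕ → Option ℕ) : Prop :=
  (∀ x, α x ≠ none → x ∈ Set.Icc 1 n) ∧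
  (∀ x y, α x = some y → y ∈ Set.Icc 1 n) ∧
  (∀ x y a, α x = some a → α y = some a → x = y) ∧
  (∀ x y a b, α x = some a → α y = some b →
    ((a : ℤ) - (b : ℤ)).natAbs = ((x : ℤ) - (y : ℤ)).natAbs)

/-- order-decreasing -/
def PDecr (α : ℕ → Option ℕ) : Prop := ∀ x a, α x = some a → a ≤ x

/-- order-preserving -/
def POPres (α : ℕ → Option ℕ) : Prop :=
  ∀ x y a b, α x = some a → α y = some b → x ≤ y → a ≤ b

/-- order-reversing -/
def PORev (α : ℕ → Option ℕ) : Prop :=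
  ∀ x y a b, α x = some a → α y = some b → x ≤ y → b ≤ a

/-- With at least one fixed point, isometry + order-preserving forces identity on domain. -/
lemma oddp_key {n : ℕ} {α : ℕ → Option ℕ} (hiso : PIso n α) (hp : POPres α)
    {f : ℕ} (hf : α f = some f) {x a : ℕ} (hx : α x = some a) : a = x := by
  have hd := hiso.2.2.2 x f a f hx hf
  rcases le_total x f with h | h
  · have := hp x f a f hx hf h
    omega
  · have := hp f x f a hf hx h
    omega

def toF (n : ℕ) (α : ℕ → Option ℕ) : Finset ℕ :=
  (Finset.Icc 1 n).filter (fun x => α x = some x)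

def ofF (S : Finset ℕ) : ℕ → Option ℕ := fun x => if x ∈ S then some x else none

theorem oddp_fix_count (n m : ℕ) (hm : 1 ≤ m) (hmn : m ≤ n) :
    Nat.card {α : ℕ → Option ℕ //
      PIso n α ∧ PDecr α ∧ POPres α ∧ (PFix α).ncard = m} =
    Nat.choose n m := by
  have e : {α : ℕ → Option ℕ //
      PIso n α ∧ PDecr α ∧ POPres α ∧ (PFix α).ncard = m} ≃
      {S : Finset ℕ // S ∈ (Finset.Icc 1 n).powersetCard m} := by
    refine ⟨fun ⟨α, hα⟩ => ⟨toF n α, ?_⟩, fun ⟨S, hS⟩ => ⟨ofF S, ?_⟩, ?_, ?_⟩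
    · -- toF lands in powersetCard
      obtain ⟨hiso, hdec, hpres, hcard⟩ := hα
      rw [Finset.mem_powersetCard]
      constructor
      · exact Finset.filter_subset _ _
      · have hset : PFix α = ↑(toF n α) := by
          ext x
          simp only [PFix, Set.mem_setOf_eq, toF, Finset.coe_filter,
            Finset.mem_Icc, Set.mem_setOf_eq]
          constructor
          · intro h
            refine ⟨?_, h⟩
            have := hiso.1 x (by simp [h])
            simpa [Set.mem_Icc] using this
          · exact fun h => h.2
        rw [hset, Set.ncard_coe_finset] at hcard
        exact hcard
    · -- ofF satisfies the predicate
      rw [Finset.mem_powersetCard] at hS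
      have hmem : ∀ x a, ofF S x = some a → x ∈ S ∧ a = x := by
        intro x a h
        unfold ofF at h
        by_cases hx : x ∈ S
        · simp [hx] at h; exact ⟨hx, h.symm⟩
        · simp [hx] at h
      have hIcc : ∀ x, x ∈ S → x ∈ Set.Icc 1 n := by
        intro x hx
        have := hS.1 hx
        simpa [Set.mem_Icc, Finset.mem_Icc] using this
      refine ⟨⟨?_, ?_, ?_, ?_⟩, ?_, ?_, ?_⟩
      · intro x hx
        rcases Option.ne_none_iff_exists'.mp hx with ⟨a, ha⟩
        exact hIcc x (hmem x a ha).1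
      · intro x y h
        obtain ⟨h1, h2⟩ := hmem x y h
        exact h2 ▸ hIcc x h1
      · intro x y a h1 h2
        have := (hmem x a h1).2
        have := (hmem y a h2).2
        omega
      · intro x y a b h1 h2
        have := (hmem x a h1).2
        have := (hmem y b h2).2
        omega
      · intro x a h
        exact le_of_eq (hmem x a h).2
      · intro x y a b h1 h2 hxy
        have := (hmem x a h1).2
        have := (hmem y b h2).2
        omega
      · have : PFix (ofF S) = ↑S := by
          ext x
          simp only [PFix, Set.mem_setOf_eq, ofF, Finset.mem_coe]
          constructor
          · intro h
            by_cases hx : x ∈ S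
            · exact hx
            · simp [hx] at h
          · intro h; simp [h]
        rw [this, Set.ncard_coe_finset, hS.2]
    · -- left inverse
      rintro ⟨α, hiso, hdec, hpres, hcard⟩
      ext1
      funext x
      simp only [ofF, toF, Finset.mem_filter, Finset.mem_Icc]
      -- there is a fixed point
      have hne : (PFix α).Nonempty := by
        rw [Set.nonempty_iff_ne_empty]
        intro h
        rw [h, Set.ncard_empty] at hcard
        omega
      obtain ⟨f, hf⟩ := hne
      by_cases hx : α x = some x
      · have := hiso.1 x (by simp [hx])
        simp only [Set.mem_Icc] at this
        simp [hx, this.1, this.2]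
      · have hnone : α x = none := by
          cases h : α x with
          | none => rfl
          | some a =>
            exact absurd (by rw [oddp_key hiso hpres hf h] at h; exact h) hx
        simp only [hnone]
        rw [if_neg]
        rintro ⟨-, h⟩
        cases h
    · -- right inverse
      rintro ⟨S, hS⟩
      rw [Finset.mem_powersetCard] at hS
      ext1
      refine Finset.ext fun x => ?_
      show x ∈ toF n (ofF S) ↔ x ∈ S
      rw [toF, Finset.mem_filter, Finset.mem_Icc]
      simp only [ofF]
      constructor
      · rintro ⟨-, h⟩
        by_cases hx : x ∈ S
        · exact hx
        · simp [hx] at h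
      · intro h
        have := hS.1 h
        simp only [Finset.mem_Icc] at this
        exact ⟨this, by simp [h]⟩
  rw [Nat.card_congr e, Nat.card_eq_fintype_card, Fintype.card_coe,
    Finset.card_powersetCard, Nat.card_Icc]
  simp
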